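/- Let f : (0,∞) → (0,∞) be measurable, locally integrable on [0,∞), with f(t) > 0 a.e., and assume f is monotone increasing on (0,t₀] for some t₀ > 0. Define F(t) = ∫₀ᵗ f(s) ds. If F is rapidly varying at 0 (index ∞), then f is rapidly varying at 0 (index ∞). -/

import Mathlib

open MeasureTheory Filter Set Topology Real

noncomputable section
set_option maxHeartbeats 1000000

/-- `f : (0,∞) → (0,∞)` is rapidly varying at `0` (index `∞`):
for every `λ ∈ (0,1)`, `f(λt)/f(t) → 0` as `t → 0⁺`, and for every `λ > 1`,
`f(λt)/f(t) → ∞` as `t → 0⁺`. -/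
def RapidVaryAt0 (f : ℝ → ℝ) : Prop :=
  (∀ l : ℝ, l ∈ Ioo (0:ℝ) 1 →
      Tendsto (fun t => f (l * t) / f t) (𝓝[>] (0:ℝ)) (𝓝 0)) ∧
  (∀ l : ℝ, 1 < l →
      Tendsto (fun t => f (l * t) / f t) (𝓝[>] (0:ℝ)) atTop)

lemma keyA (f : ℝ → ℝ)
    (hint : ∀ x > (0:ℝ), IntegrableOn f (Ioc 0 x))
    (t₀ : ℝ) (hmono : MonotoneOn f (Ioc 0 t₀))
    (F : ℝ → ℝ) (hF : ∀ t > (0:ℝ), F t = ∫ s in Ioc (0:ℝ) t, f s)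
    {a b : ℝ} (ha : 0 < a) (hab : a ≤ b) (hb : b ≤ t₀) :
    f a * (b - a) ≤ F b - F a ∧ F b - F a ≤ f b * (b - a) := by
  have hb0 : 0 < b := lt_of_lt_of_le ha hab
  have hintb := hint b hb0
  have h1 : IntegrableOn f (Ioc 0 a) := hintb.mono_set (Ioc_subset_Ioc le_rfl hab)
  have h2 : IntegrableOn f (Ioc a b) := hintb.mono_set (Ioc_subset_Ioc ha.le le_rfl)
  have hsplit : F b - F a = ∫ s in Ioc a b, f s := by
    rw [hF a ha, hF b hb0, ← Ioc_union_Ioc_eq_Ioc ha.le hab,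
        setIntegral_union (Ioc_disjoint_Ioc_of_le le_rfl) measurableSet_Ioc h1 h2]
    ring
  have hvol : (volume (Ioc a b)).toReal = b - a := by
    rw [Real.volume_Ioc, ENNReal.toReal_ofReal (by linarith)]
  have hfin : volume (Ioc a b) < ⊤ := by
    rw [Real.volume_Ioc]; exact ENNReal.ofReal_lt_top
  have hmema : a ∈ Ioc (0:ℝ) t₀ := ⟨ha, hab.trans hb⟩
  have hmemb : b ∈ Ioc (0:ℝ) t₀ := ⟨hb0, hb⟩
  constructor
  · rw [hsplit]
    calc f a * (b - a) = ∫ _ in Ioc a b, f a := by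
          rw [setIntegral_const, measureReal_def, hvol, smul_eq_mul, mul_comm]
      _ ≤ ∫ s in Ioc a b, f s := by
          apply setIntegral_mono_on (integrableOn_const hfin.ne) h2 measurableSet_Ioc
          intro x hx
          exact hmono hmema ⟨ha.trans hx.1, hx.2.trans hb⟩ hx.1.le
  · rw [hsplit]
    calc (∫ s in Ioc a b, f s) ≤ ∫ _ in Ioc a b, f b := by
          apply setIntegral_mono_on h2 (integrableOn_const hfin.ne) measurableSet_Ioc
          intro x hx
          exact hmono ⟨ha.trans hx.1, hx.2.trans hb⟩ hmemb hx.2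
      _ = f b * (b - a) := by rw [setIntegral_const, measureReal_def, hvol, smul_eq_mul, mul_comm]

theorem stmt3 (f : ℝ → ℝ)
    (hmeas : Measurable f)
    (hpos : ∀ t > (0:ℝ), 0 < f t)
    (hint : ∀ x > (0:ℝ), IntegrableOn f (Ioc 0 x))
    (t₀ : ℝ) (ht₀ : 0 < t₀) (hmono : MonotoneOn f (Ioc 0 t₀))
    (F : ℝ → ℝ) (hF : ∀ t > (0:ℝ), F t = ∫ s in Ioc (0:ℝ) t, f s)
    (hrvF : RapidVaryAt0 F) :
    RapidVaryAt0 f := by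
  have hFnn : ∀ t > (0:ℝ), 0 ≤ F t := by
    intro t ht
    rw [hF t ht]
    exact setIntegral_nonneg measurableSet_Ioc fun x hx => (hpos x hx.1).le
  have hFpos : ∀ t, 0 < t → t ≤ t₀ → 0 < F t := by
    intro t ht htt
    have h := (keyA f hint t₀ hmono F hF (by positivity : (0:ℝ) < t/2)
      (by linarith) htt).1
    have := hpos (t/2) (by positivity)
    have := hFnn (t/2) (by positivity)
    nlinarith
  constructor
  · -- λ ∈ (0,1)
    intro l hl
    obtain ⟨hl0, hl1⟩ := hl
    obtain ⟨m, hlm, hm1⟩ : ∃ m : ℝ, l < m ∧ m < 1 := ⟨(l + 1) / 2, by linarith, by linarith⟩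
    have hm0 : 0 < m := hl0.trans hlm
    have h0 := hrvF.1 m ⟨hm0, hm1⟩
    have hhalf : ∀ᶠ t in 𝓝[>] (0:ℝ), F (m * t) / F t < 1/2 :=
      h0.eventually_lt_const (by norm_num)
    have hIoo : ∀ᶠ t in 𝓝[>] (0:ℝ), t ∈ Ioo 0 t₀ :=
      Ioo_mem_nhdsGT_of_mem ⟨le_refl 0, ht₀⟩
    have hbound : ∀ᶠ t in 𝓝[>] (0:ℝ),
        f (l * t) / f t ≤ (2 * (1 - m) / (m - l)) * (F (m * t) / F t) := by
      filter_upwards [hhalf, hIoo] with t hh ⟨ht0, htt₀⟩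
      have hmt0 : 0 < m * t := by positivity
      have hlt0 : 0 < l * t := by positivity
      have hA := (keyA f hint t₀ hmono F hF hlt0
        (by nlinarith : l * t ≤ m * t) (by nlinarith : m * t ≤ t₀)).1
      have hB := (keyA f hint t₀ hmono F hF hmt0
        (by nlinarith : m * t ≤ t) htt₀.le).2
      have hFt : 0 < F t := hFpos t ht0 htt₀.le
      have hFmt : 0 ≤ F (m * t) := hFnn _ hmt0
      have hFlt : 0 ≤ F (l * t) := hFnn _ hlt0
      have hFhalf : F (m * t) ≤ F t / 2 := by
        rw [div_lt_iff₀ hFt] at hh; linarith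
      -- F t / 2 ≤ f t * ((1-m) t)
      have hB' : F t / 2 ≤ f t * ((1 - m) * t) := by linarith [hB, hFhalf]
      have hA' : f (l * t) * ((m - l) * t) ≤ F (m * t) := by linarith [hA, hFlt]
      have hft : 0 < f t := hpos t ht0
      have hflt : 0 < f (l * t) := hpos _ hlt0
      rw [← mul_div_assoc, div_le_div_iff₀ hft hFt]
      have hml0 : (0:ℝ) < (m - l) * t := by nlinarith
      rw [← mul_le_mul_iff_of_pos_right hml0]
      have hC : 2 * (1 - m) / (m - l) * F (m * t) * f t * ((m - l) * t)
          = 2 * ((1 - m) * t) * (F (m * t) * f t) := by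
        have hne : m - l ≠ 0 := by linarith
        field_simp
      rw [hC]
      nlinarith [mul_le_mul_of_nonneg_right hA' hFt.le,
        mul_le_mul_of_nonneg_left hB' hFmt]
    have hnn : ∀ᶠ t in 𝓝[>] (0:ℝ), 0 ≤ f (l * t) / f t := by
      filter_upwards [hIoo] with t ⟨ht0, _⟩
      exact div_nonneg (hpos _ (by positivity)).le (hpos _ ht0).le
    have hten : Tendsto (fun t => (2 * (1 - m) / (m - l)) * (F (m * t) / F t))
        (𝓝[>] (0:ℝ)) (𝓝 0) := by
      simpa using h0.const_mul (2 * (1 - m) / (m - l))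
    exact squeeze_zero' hnn hbound hten
  · -- λ > 1
    intro l hl
    obtain ⟨m, h1m, hml⟩ : ∃ m : ℝ, 1 < m ∧ m < l := ⟨(l + 1) / 2, by linarith, by linarith⟩
    have hl0 : (0:ℝ) < l := by linarith
    have hm0 : (0:ℝ) < m := by linarith
    -- F(m t)/F(l t) → 0
    have hcomp : Tendsto (fun t => l * t) (𝓝[>] (0:ℝ)) (𝓝[>] (0:ℝ)) := by
      apply tendsto_nhdsWithin_of_tendsto_nhds_of_eventually_within
      · have : Tendsto (fun t : ℝ => l * t) (𝓝 0) (𝓝 (l * 0)) :=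
          (continuous_const.mul continuous_id).tendsto 0
        simpa using this.mono_left nhdsWithin_le_nhds
      · filter_upwards [self_mem_nhdsWithin] with t ht
        exact mul_pos hl0 ht
    have h0 : Tendsto (fun t => F (m * t) / F (l * t)) (𝓝[>] (0:ℝ)) (𝓝 0) := by
      have := (hrvF.1 (m / l) ⟨by positivity, (div_lt_one hl0).2 hml⟩).comp hcomp
      refine this.congr fun t => ?_
      simp only [Function.comp_apply]
      congr 2
      field_simp
    have hIoo : ∀ᶠ t in 𝓝[>] (0:ℝ), t ∈ Ioo 0 (t₀ / l) :=
      Ioo_mem_nhdsGT_of_mem ⟨le_refl 0, div_pos ht₀ hl0⟩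
    have hhalf : ∀ᶠ t in 𝓝[>] (0:ℝ), F (m * t) / F (l * t) < 1/2 :=
      h0.eventually_lt_const (by norm_num)
    -- F(l t)/F(m t) → atTop
    have hratpos : ∀ᶠ t in 𝓝[>] (0:ℝ), 0 < F (m * t) / F (l * t) := by
      filter_upwards [hIoo] with t ⟨ht0, htl⟩
      have hlt : l * t ≤ t₀ := by rw [lt_div_iff₀ hl0] at htl; nlinarith
      exact div_pos (hFpos _ (mul_pos hm0 ht0) (by nlinarith))
        (hFpos _ (mul_pos hl0 ht0) hlt)
    have hinv : Tendsto (fun t => F (l * t) / F (m * t)) (𝓝[>] (0:ℝ)) atTop := by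
      have : Tendsto (fun t => F (m * t) / F (l * t)) (𝓝[>] (0:ℝ)) (𝓝[>] (0:ℝ)) :=
        tendsto_nhdsWithin_iff.2 ⟨h0, hratpos⟩
      have := this.inv_tendsto_nhdsGT_zero
      simpa [Pi.inv_def, inv_div] using this
    have hten : Tendsto (fun t => ((m - 1) / (2 * (l - m))) * (F (l * t) / F (m * t)))
        (𝓝[>] (0:ℝ)) atTop :=
      hinv.const_mul_atTop (div_pos (by linarith) (by linarith))
    apply tendsto_atTop_mono' _ _ hten
    filter_upwards [hIoo, hhalf] with t ⟨ht0, htl⟩ hh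
    have hlt : l * t ≤ t₀ := by rw [lt_div_iff₀ hl0] at htl; nlinarith
    have hmt0 : 0 < m * t := by positivity
    have hlt0 : 0 < l * t := by positivity
    have hA := (keyA f hint t₀ hmono F hF hmt0
      (by nlinarith : m * t ≤ l * t) hlt).2
    have hB := (keyA f hint t₀ hmono F hF ht0
      (by nlinarith : t ≤ m * t) (by nlinarith : m * t ≤ t₀)).1
    have hFlt : 0 < F (l * t) := hFpos _ hlt0 hlt
    have hFmt : 0 < F (m * t) := hFpos _ hmt0 (by nlinarith)
    have hFt : 0 ≤ F t := hFnn _ ht0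
    have hFhalf : F (m * t) ≤ F (l * t) / 2 := by
      rw [div_lt_iff₀ hFlt] at hh; linarith
    have hA' : F (l * t) / 2 ≤ f (l * t) * ((l - m) * t) := by linarith [hA, hFhalf]
    have hB' : f t * ((m - 1) * t) ≤ F (m * t) := by linarith [hB, hFt]
    have hft : 0 < f t := hpos t ht0
    have hflt : 0 < f (l * t) := hpos _ hlt0
    rw [← mul_div_assoc, div_le_div_iff₀ hFmt hft]
    have hlm0 : (0:ℝ) < 2 * (l - m) * t := by nlinarith
    rw [← mul_le_mul_iff_of_pos_right hlm0]
    have hC : (m - 1) / (2 * (l - m)) * F (l * t) * f t * (2 * (l - m) * t)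
        = ((m - 1) * t) * (F (l * t) * f t) := by
      have hne : l - m ≠ 0 := by linarith
      field_simp
    rw [hC]
    nlinarith [mul_le_mul_of_nonneg_right hA' hFmt.le,
      mul_le_mul_of_nonneg_left hB' hFlt.le]
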